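/- Let M be a multiset of n real numbers containing at least n - t elements in the interval [v, v + ε], where n > 3t. Then the trimmed average AVG(M) (average after removing the t smallest and t largest elements) lies in [v, v + ε]. -/

import Mathlib

/-- `M` with its `t` smallest and `t` largest elements removed (as a sorted list). -/
noncomputable def trimmed (t : ℕ) (M : Multiset ℝ) : List ℝ :=
  ((M.sort (· ≤ ·)).drop t).take (Multiset.card M - 2 * t)

/-- The trimmed average: the mean of `M` after removing the `t` smallest and `t` largest. -/
noncomputable def tAVG (t : ℕ) (M : Multiset ℝ) : ℝ :=
  (trimmed t M).sum / ((Multiset.card M : ℝ) - 2 * t)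


theorem stmt_1 (n t : ℕ) (ht : 3 * t < n) (v ε : ℝ) (hε : 0 ≤ ε)
    (M : Multiset ℝ) (hM : Multiset.card M = n)
    (h : n - t ≤ Multiset.card (M.filter (fun x => v ≤ x ∧ x ≤ v + ε))) :
    tAVG t M ∈ Set.Icc v (v + ε) := by
  classical
  set l := M.sort (· ≤ ·) with hl
  have hsorted : l.Pairwise (· ≤ ·) := M.pairwise_sort _
  have hperm : (l : Multiset ℝ) = M := M.sort_eq _
  have hlen : l.length = n := by
    have := congrArg Multiset.card hperm
    simpa [hM] using this
  have h2t : 2 * t ≤ n := by omega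
  have hcount : n - t ≤ l.countP (fun x => decide (v ≤ x ∧ x ≤ v + ε)) := by
    have hc : Multiset.card (M.filter (fun x => v ≤ x ∧ x ≤ v + ε))
        = l.countP (fun x => decide (v ≤ x ∧ x ≤ v + ε)) := by
      rw [← hperm, Multiset.filter_coe, Multiset.coe_card, List.countP_eq_length_filter]
    omega
  -- every index i with t ≤ i < n - t gives an element in [v, v+ε]
  have key : ∀ i (hi : i < l.length), t ≤ i → i < n - t → v ≤ l[i] ∧ l[i] ≤ v + ε := by
    intro i hi hti hint
    by_contra hnot
    rcases not_and_or.mp hnot with h1 | h2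
    · push_neg at h1
      -- all elements of take (i+1) fail the predicate
      have hz : (l.take (i+1)).countP (fun x => decide (v ≤ x ∧ x ≤ v + ε)) = 0 := by
        rw [List.countP_eq_zero]
        intro x hx
        obtain ⟨j, hj, rfl⟩ := List.mem_take_iff_getElem.mp hx
        have hji : j ≤ i := by omega
        have hjl : j < l.length := by omega
        have hle : l.get ⟨j, hjl⟩ ≤ l.get ⟨i, hi⟩ :=
          hsorted.rel_get_of_le (by simpa using hji)
        simp only [List.getElem_take, List.get_eq_getElem] at *
        simp only [decide_eq_true_eq, not_and]
        intro hv
        exact absurd (le_trans hv hle) (not_le.mpr h1)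
      have hsplit : l.countP (fun x => decide (v ≤ x ∧ x ≤ v + ε))
          = (l.take (i+1)).countP (fun x => decide (v ≤ x ∧ x ≤ v + ε))
            + (l.drop (i+1)).countP (fun x => decide (v ≤ x ∧ x ≤ v + ε)) := by
        conv_lhs => rw [← List.take_append_drop (i+1) l]
        exact List.countP_append
      have hdle : (l.drop (i+1)).countP (fun x => decide (v ≤ x ∧ x ≤ v + ε))
          ≤ n - (i+1) := by
        have := List.countP_le_length (l := l.drop (i+1))
          (p := fun x => decide (v ≤ x ∧ x ≤ v + ε))
        simpa [hlen] using this
      omega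
    · push_neg at h2
      have hz : (l.drop i).countP (fun x => decide (v ≤ x ∧ x ≤ v + ε)) = 0 := by
        rw [List.countP_eq_zero]
        intro x hx
        obtain ⟨j, hj, rfl⟩ := List.mem_iff_getElem.mp hx
        have hle : l.get ⟨i, hi⟩ ≤ l.get ⟨i + j, by simp at hj; omega⟩ :=
          hsorted.rel_get_of_le (by simp)
        simp only [List.getElem_drop, List.get_eq_getElem] at *
        simp only [decide_eq_true_eq, not_and]
        intro _
        exact not_le.mpr (lt_of_lt_of_le h2 hle)
      have hsplit : l.countP (fun x => decide (v ≤ x ∧ x ≤ v + ε))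
          = (l.take i).countP (fun x => decide (v ≤ x ∧ x ≤ v + ε))
            + (l.drop i).countP (fun x => decide (v ≤ x ∧ x ≤ v + ε)) := by
        conv_lhs => rw [← List.take_append_drop i l]
        exact List.countP_append
      have htle : (l.take i).countP (fun x => decide (v ≤ x ∧ x ≤ v + ε)) ≤ i := by
        have := List.countP_le_length (l := l.take i)
          (p := fun x => decide (v ≤ x ∧ x ≤ v + ε))
        have hlt : (l.take i).length ≤ i := by simp
        omega
      omega
  -- every element of trimmed is in [v, v+ε]
  have hmem : ∀ x ∈ trimmed t M, v ≤ x ∧ x ≤ v + ε := by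
    intro x hx
    rw [trimmed, ← hl, hM] at hx
    obtain ⟨i, hi, rfl⟩ := List.mem_take_iff_getElem.mp hx
    rw [List.getElem_drop]
    have hilen : i < n - 2 * t := by
      simp [hlen] at hi
      omega
    exact key (t + i) (by omega) (by omega) (by omega)
  -- length of trimmed
  have hlentr : (trimmed t M).length = n - 2 * t := by
    rw [trimmed, ← hl, hM]
    simp [hlen]
    omega
  have hsumle : (trimmed t M).sum ≤ (n - 2 * t : ℕ) * (v + ε) := by
    have := List.sum_le_card_nsmul (trimmed t M) (v + ε) (fun x hx => (hmem x hx).2)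
    rw [hlentr, nsmul_eq_mul] at this
    exact this
  have hsumge : ((n - 2 * t : ℕ) : ℝ) * v ≤ (trimmed t M).sum := by
    have := List.card_nsmul_le_sum (trimmed t M) v (fun x hx => (hmem x hx).1)
    rw [hlentr, nsmul_eq_mul] at this
    exact this
  have hcast : ((Multiset.card M : ℝ) - 2 * t) = ((n - 2 * t : ℕ) : ℝ) := by
    rw [hM]
    push_cast [h2t]
    ring
  have hpos : (0 : ℝ) < ((n - 2 * t : ℕ) : ℝ) := by
    have : 0 < n - 2 * t := by omega
    exact_mod_cast this
  rw [tAVG, hcast]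
  constructor
  · rw [le_div_iff₀ hpos]
    linarith [hsumge]
  · rw [div_le_iff₀ hpos]
    linarith [hsumle]
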